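/- Let G be a finite graph containing a triangle whose neighborhood set system has VC-dimension at most 1. Then any two distinct maximum independent sets of G are disjoint; consequently h(G) ≤ n/α(G) where n = |V(G)|. -/

import Mathlib

def IsIndep {V : Type*} (G : SimpleGraph V) (A : Finset V) : Prop :=
  ∀ a ∈ A, ∀ b ∈ A, ¬ G.Adj a b

def IsMaxIndep {V : Type*} [Fintype V] (G : SimpleGraph V) (A : Finset V) : Prop :=
  IsIndep G A ∧ ∀ B : Finset V, IsIndep G B → B.card ≤ A.card

def Shatters {V : Type*} (F : Set (Set V)) (S : Set V) : Prop :=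
  ∀ B ⊆ S, ∃ A ∈ F, A ∩ S = B

def VCDimLE {V : Type*} (G : SimpleGraph V) (d : ℕ) : Prop :=
  ∀ S : Finset V, Shatters {N | ∃ v : V, N = G.neighborSet v} (S : Set V) → S.card ≤ d

lemma shatters_pair {V : Type*} [DecidableEq V] (G : SimpleGraph V) (x y : V)
    (v0 v1 v2 v3 : V)
    (h0x : ¬ G.Adj v0 x) (h0y : ¬ G.Adj v0 y)
    (h1x : G.Adj v1 x) (h1y : ¬ G.Adj v1 y)
    (h2x : ¬ G.Adj v2 x) (h2y : G.Adj v2 y)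
    (h3x : G.Adj v3 x) (h3y : G.Adj v3 y) :
    Shatters {N | ∃ v : V, N = G.neighborSet v} (↑({x, y} : Finset V)) := by
  intro B hB
  have hmem : ∀ z ∈ B, z = x ∨ z = y := by
    intro z hz
    have := hB hz
    simpa using this
  by_cases hx : x ∈ B <;> by_cases hy : y ∈ B
  · refine ⟨G.neighborSet v3, ⟨v3, rfl⟩, ?_⟩
    ext z
    simp only [Set.mem_inter_iff, SimpleGraph.mem_neighborSet, Finset.coe_insert,
      Finset.coe_singleton, Set.mem_insert_iff, Set.mem_singleton_iff]
    constructor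
    · rintro ⟨-, rfl | rfl⟩ <;> assumption
    · intro hz
      rcases hmem z hz with rfl | rfl
      · exact ⟨h3x, Or.inl rfl⟩
      · exact ⟨h3y, Or.inr rfl⟩
  · refine ⟨G.neighborSet v1, ⟨v1, rfl⟩, ?_⟩
    ext z
    simp only [Set.mem_inter_iff, SimpleGraph.mem_neighborSet, Finset.coe_insert,
      Finset.coe_singleton, Set.mem_insert_iff, Set.mem_singleton_iff]
    constructor
    · rintro ⟨hadj, rfl | rfl⟩
      · exact hx
      · exact absurd hadj h1y
    · intro hz
      rcases hmem z hz with rfl | rfl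
      · exact ⟨h1x, Or.inl rfl⟩
      · exact absurd hz hy
  · refine ⟨G.neighborSet v2, ⟨v2, rfl⟩, ?_⟩
    ext z
    simp only [Set.mem_inter_iff, SimpleGraph.mem_neighborSet, Finset.coe_insert,
      Finset.coe_singleton, Set.mem_insert_iff, Set.mem_singleton_iff]
    constructor
    · rintro ⟨hadj, rfl | rfl⟩
      · exact absurd hadj h2x
      · exact hy
    · intro hz
      rcases hmem z hz with rfl | rfl
      · exact absurd hz hx
      · exact ⟨h2y, Or.inr rfl⟩
  · refine ⟨G.neighborSet v0, ⟨v0, rfl⟩, ?_⟩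
    ext z
    simp only [Set.mem_inter_iff, SimpleGraph.mem_neighborSet, Finset.coe_insert,
      Finset.coe_singleton, Set.mem_insert_iff, Set.mem_singleton_iff]
    constructor
    · rintro ⟨hadj, rfl | rfl⟩
      · exact absurd hadj h0x
      · exact absurd hadj h0y
    · intro hz
      rcases hmem z hz with rfl | rfl
      · exact absurd hz hx
      · exact absurd hz hy

lemma no_shatter_pair {V : Type*} [DecidableEq V] (G : SimpleGraph V)
    (hVC : VCDimLE G 1) {x y : V} (hxy : x ≠ y) (v0 v1 v2 v3 : V)
    (h0x : ¬ G.Adj v0 x) (h0y : ¬ G.Adj v0 y)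
    (h1x : G.Adj v1 x) (h1y : ¬ G.Adj v1 y)
    (h2x : ¬ G.Adj v2 x) (h2y : G.Adj v2 y)
    (h3x : G.Adj v3 x) (h3y : G.Adj v3 y) : False := by
  have := hVC {x, y} (shatters_pair G x y v0 v1 v2 v3 h0x h0y h1x h1y h2x h2y h3x h3y)
  rw [Finset.card_pair hxy] at this
  omega

lemma exists_nbr_of_maxIndep {V : Type*} [Fintype V] [DecidableEq V] (G : SimpleGraph V)
    {A : Finset V} (hA : IsMaxIndep G A) {v : V} (hv : v ∉ A) : ∃ b ∈ A, G.Adj v b := by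
  by_contra h
  push_neg at h
  have hind : IsIndep G (insert v A) := by
    intro x hx y hy hadj
    rw [Finset.mem_insert] at hx hy
    rcases hx with rfl | hx
    · rcases hy with rfl | hy
      · exact G.irrefl hadj
      · exact h y hy hadj
    · rcases hy with rfl | hy
      · exact h x hx hadj.symm
      · exact hA.1 x hx y hy hadj
  have := hA.2 _ hind
  rw [Finset.card_insert_of_notMem hv] at this
  omega

/-- In a graph of VC-dimension at most 1 containing a triangle, distinct maximum
independent sets are disjoint, hence `h(G) ≤ n / α(G)`. -/
theorem vcdim_one_triangle_disjoint {V : Type*} [Fintype V] [DecidableEq V]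
    (G : SimpleGraph V) (hVC : VCDimLE G 1) (a₁ a₂ a₃ : V)
    (h12 : G.Adj a₁ a₂) (h13 : G.Adj a₁ a₃) (h23 : G.Adj a₂ a₃) :
    (∀ A B : Finset V, IsMaxIndep G A → IsMaxIndep G B → A ≠ B → Disjoint A B) ∧
    (∀ A₀ : Finset V, IsMaxIndep G A₀ →
      ∃ T : Finset V, T.card ≤ Fintype.card V / A₀.card ∧
        ∀ A : Finset V, IsMaxIndep G A → (A ∩ T).Nonempty) := by
  classical
  -- every vertex is adjacent to one of each pair of the triangle
  have hpair : ∀ u v w : V, G.Adj u v → G.Adj u w → G.Adj v w →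
      ∀ z : V, G.Adj z u ∨ G.Adj z v := by
    intro u v w huv huw hvw z
    by_contra h
    push_neg at h
    exact no_shatter_pair G hVC huv.ne z v u w h.1 h.2 huv.symm
      (G.irrefl) (G.irrefl) huv huw.symm hvw.symm
  -- any two vertices admit a common neighbor
  have hcommon : ∀ z z' : V, ∃ c, G.Adj c z ∧ G.Adj c z' := by
    intro z z'
    have p1 := hpair a₁ a₂ a₃ h12 h13 h23 z
    have p2 := hpair a₁ a₃ a₂ h13 h12 h23.symm z
    have p3 := hpair a₂ a₃ a₁ h23 h12.symm h13.symm z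
    have q1 := hpair a₁ a₂ a₃ h12 h13 h23 z'
    have q2 := hpair a₁ a₃ a₂ h13 h12 h23.symm z'
    have q3 := hpair a₂ a₃ a₁ h23 h12.symm h13.symm z'
    have : (G.Adj z a₁ ∧ G.Adj z' a₁) ∨ (G.Adj z a₂ ∧ G.Adj z' a₂) ∨
        (G.Adj z a₃ ∧ G.Adj z' a₃) := by tauto
    rcases this with ⟨h, h'⟩ | ⟨h, h'⟩ | ⟨h, h'⟩
    · exact ⟨a₁, h.symm, h'.symm⟩
    · exact ⟨a₂, h.symm, h'.symm⟩
    · exact ⟨a₃, h.symm, h'.symm⟩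
  have hdisj : ∀ A B : Finset V, IsMaxIndep G A → IsMaxIndep G B → A ≠ B → Disjoint A B := by
    intro A B hA hB hne
    rw [Finset.disjoint_left]
    intro x hxA hxB
    exfalso
    have hcard : A.card = B.card := le_antisymm (hB.2 A hA.1) (hA.2 B hB.1)
    have hex : ∃ a ∈ A, a ∉ B := by
      by_contra h
      push_neg at h
      exact hne (Finset.eq_of_subset_of_card_le (fun a ha => h a ha) (le_of_eq hcard.symm))
    obtain ⟨a, haA, haB⟩ := hex
    obtain ⟨b, hbB, hab⟩ := exists_nbr_of_maxIndep G hB haB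
    have hbA : b ∉ A := fun hbA => hA.1 a haA b hbA hab
    have hax : a ≠ x := fun h => haB (h ▸ hxB)
    have hbx : b ≠ x := fun h => hbA (h ▸ hxA)
    -- N(x) ⊆ N(a)
    have hNa : ∀ z, G.Adj z x → G.Adj z a := by
      intro z hz
      by_contra hza
      obtain ⟨c, hca, hcx⟩ := hcommon a x
      exact no_shatter_pair G hVC hax a b z c
        (G.irrefl) (hA.1 a haA x hxA) hab.symm (hB.1 b hbB x hxB) hza hz hca hcx
    -- N(x) ⊆ N(b)
    have hNb : ∀ z, G.Adj z x → G.Adj z b := by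
      intro z hz
      by_contra hzb
      obtain ⟨c, hcb, hcx⟩ := hcommon b x
      exact no_shatter_pair G hVC hbx b a z c
        (G.irrefl) (hB.1 b hbB x hxB) hab (hA.1 a haA x hxA) hzb hz hcb hcx
    obtain ⟨c, hcx, -⟩ := hcommon x x
    exact no_shatter_pair G hVC hab.ne x b a c
      (hA.1 x hxA a haA) (hB.1 x hxB b hbB) hab.symm (G.irrefl) (G.irrefl) hab
      (hNa c hcx) (hNb c hcx)
  refine ⟨hdisj, ?_⟩
  intro A₀ hA₀
  have hα : 0 < A₀.card := by
    have h1 : IsIndep G {a₁} := by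
      intro u hu v hv
      rw [Finset.mem_singleton] at hu hv
      subst hu; subst hv
      simp
    have h2 : ({a₁} : Finset V).card ≤ A₀.card := hA₀.2 {a₁} h1
    rw [Finset.card_singleton] at h2
    omega
  set M : Finset (Finset V) := Finset.univ.filter (fun A => IsMaxIndep G A) with hM
  set f : Finset V → V := fun A => if h : A.Nonempty then h.choose else a₁ with hf
  have hfA : ∀ A : Finset V, IsMaxIndep G A → f A ∈ A := by
    intro A hA
    have hAne : A.Nonempty := by
      rw [← Finset.card_pos]
      have : A₀.card ≤ A.card := hA.2 A₀ hA₀.1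
      omega
    simp only [hf, dif_pos hAne]
    exact hAne.choose_spec
  refine ⟨M.image f, ?_, ?_⟩
  · have hcardM : ∀ A ∈ M, A.card = A₀.card := by
      intro A hAM
      rw [hM, Finset.mem_filter] at hAM
      exact le_antisymm (hA₀.2 A hAM.2.1) (hAM.2.2 A₀ hA₀.1)
    have hsum : M.card * A₀.card ≤ Fintype.card V := by
      have hdb : (M.biUnion id).card = ∑ A ∈ M, (id A).card := by
        apply Finset.card_biUnion
        intro A hAM B hBM hAB
        simp only [Finset.mem_coe, hM, Finset.mem_filter] at hAM hBM
        exact hdisj A B hAM.2 hBM.2 hAB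
      have h1 : ∑ A ∈ M, (id A).card = M.card * A₀.card := by
        calc ∑ A ∈ M, (id A).card = ∑ A ∈ M, A₀.card :=
              Finset.sum_congr rfl (fun A hA => hcardM A hA)
          _ = M.card * A₀.card := by rw [Finset.sum_const, smul_eq_mul]
      have h2 : (M.biUnion id).card ≤ Fintype.card V := by
        rw [← Finset.card_univ]
        exact Finset.card_le_card (Finset.subset_univ _)
      omega
    calc (M.image f).card ≤ M.card := Finset.card_image_le
      _ ≤ Fintype.card V / A₀.card := (Nat.le_div_iff_mul_le hα).mpr hsum
  · intro A hA
    have hAM : A ∈ M := by rw [hM, Finset.mem_filter]; exact ⟨Finset.mem_univ _, hA⟩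
    exact ⟨f A, Finset.mem_inter.mpr ⟨hfA A hA, Finset.mem_image_of_mem f hAM⟩⟩
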